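/- In the discrete lm-SCM for the motivating example (Figure 1c), under Positivity, the NATE is recovered as the mixture-over-contexts estimand of Equations (12)–(13) (an instance of Proposition 4): θ = μ(R = 0) · Σ_{w ∈ 𝒲} μ(W = w | R = 0) · (Q₀(w, 1) − Q₀(w, 0)) + μ(R = 1) · Σ_{w ∈ 𝒲} Σ_{y ∈ 𝒴₀} μ(W = w, Y₀ = y | R = 1) · (Q₁(w, y, 1) − Q₁(w, y, 0)), where Q₁(w, y, a) := E[Y₁ | W = w, Y₀ = y, A = a, R = 1] and Q₀(w, a) := E[Y₁ | W = w, A = a, R = 0]. -/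

import Mathlib

open MeasureTheory ProbabilityTheory

/-- Conditional probability of `S` given the event `E`: `μ(S ∩ E) / μ(E)`. -/
noncomputable def cprob {Ω : Type*} [MeasurableSpace Ω] (μ : Measure Ω) (S E : Set Ω) : ENNReal :=
  μ (S ∩ E) / μ E

/-- Conditional expectation of `X` given the event `E`: `μ(E)⁻¹ * ∫_E X dμ`. -/
noncomputable def cexp {Ω : Type*} [MeasurableSpace Ω] (μ : Measure Ω) (X : Ω → ℝ) (E : Set Ω) : ℝ :=
  ((μ E).toReal)⁻¹ * ∫ ω in E, X ω ∂μ


section Aux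

variable {Ω : Type*} {mS mY : MeasurableSpace Ω} [mΩ : MeasurableSpace Ω]
  {μ : Measure Ω}

lemma aux_lintegral (hS : mS ≤ mΩ) (hY : mY ≤ mΩ)
    (hInd : ProbabilityTheory.Indep mS mY μ) {E : Set Ω} (hEm : MeasurableSet[mS] E)
    {g : Ω → ENNReal} (hg : Measurable[mY] g) :
    ∫⁻ ω in E, g ω ∂μ = μ E * ∫⁻ ω, g ω ∂μ := by
  have h := lintegral_mul_eq_lintegral_mul_lintegral_of_independent_measurableSpace
    (f := E.indicator fun _ => (1 : ENNReal)) (g := g) hS hY hInd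
    ((measurable_const : Measurable[mS] fun _ : Ω => (1 : ENNReal)).indicator hEm) hg
  have hpt : ∀ ω, E.indicator (fun _ => (1 : ENNReal)) ω * g ω = E.indicator g ω := by
    intro ω; by_cases hω : ω ∈ E <;> simp [hω]
  rw [lintegral_congr hpt, lintegral_indicator (hS _ hEm),
    lintegral_indicator (hS _ hEm), setLIntegral_one] at h
  exact h

lemma aux_integral [IsProbabilityMeasure μ] (hS : mS ≤ mΩ) (hY : mY ≤ mΩ)
    (hInd : ProbabilityTheory.Indep mS mY μ) {E : Set Ω} (hEm : MeasurableSet[mS] E)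
    {g : Ω → ℝ} (hg : Measurable[mY] g) (hgi : Integrable g μ) :
    ∫ ω in E, g ω ∂μ = (μ E).toReal * ∫ ω, g ω ∂μ := by
  set X : Ω → ℝ := E.indicator fun _ => (1 : ℝ) with hX
  have hXm : Measurable[mS] X := measurable_const.indicator hEm
  have hindf : ProbabilityTheory.IndepFun X g μ :=
    ProbabilityTheory.indep_of_indep_of_le_right
      (ProbabilityTheory.indep_of_indep_of_le_left hInd (measurable_iff_comap_le.1 hXm))
      (measurable_iff_comap_le.1 hg)
  have hXi : Integrable X μ := (integrable_const (1 : ℝ)).indicator (hS _ hEm)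
  have h := hindf.integral_mul_eq_mul_integral hXi.1 hgi.1
  have hpt : ∀ ω, (X * g) ω = E.indicator g ω := by
    intro ω; by_cases hω : ω ∈ E <;> simp [hX, hω]
  rw [integral_congr_ae (Filter.Eventually.of_forall hpt), integral_indicator (hS _ hEm)] at h
  rw [h, hX, integral_indicator_const (1 : ℝ) (hS _ hEm), smul_eq_mul, mul_one, measureReal_def]

lemma aux_integrable (hS : mS ≤ mΩ) (hY : mY ≤ mΩ)
    (hInd : ProbabilityTheory.Indep mS mY μ) {E : Set Ω} (hEm : MeasurableSet[mS] E)
    (hE0 : μ E ≠ 0) {g h : Ω → ℝ} (hg : Measurable[mY] g)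
    (heq : ∀ ω ∈ E, g ω = h ω) (hh : Integrable h μ) : Integrable g μ := by
  have hgm : Measurable g := hg.mono hY le_rfl
  refine ⟨hgm.aestronglyMeasurable, ?_⟩
  have hkey : ∫⁻ ω in E, (‖g ω‖₊ : ENNReal) ∂μ = μ E * ∫⁻ ω, (‖g ω‖₊ : ENNReal) ∂μ :=
    aux_lintegral hS hY hInd hEm
      (Measurable.comp measurable_coe_nnreal_ennreal (Measurable.comp measurable_nnnorm hg))
  have hcongr : ∫⁻ ω in E, (‖g ω‖₊ : ENNReal) ∂μ = ∫⁻ ω in E, (‖h ω‖₊ : ENNReal) ∂μ :=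
    setLIntegral_congr_fun (hS _ hEm)
      (fun ω hω => by rw [heq ω hω])
  have hlt : ∫⁻ ω in E, (‖h ω‖₊ : ENNReal) ∂μ < ⊤ :=
    lt_of_le_of_lt (setLIntegral_le_lintegral _ _) hh.2
  have hfin : μ E * ∫⁻ ω, (‖g ω‖₊ : ENNReal) ∂μ < ⊤ := by
    rw [← hkey, hcongr]; exact hlt
  have : ∫⁻ ω, (‖g ω‖₊ : ENNReal) ∂μ < ⊤ := by
    by_contra hcon
    push_neg at hcon
    rw [top_le_iff.1 hcon, ENNReal.mul_top hE0] at hfin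
    exact (lt_irrefl _ hfin)
  exact this

end Aux

/-- In the discrete lm-SCM of Figure 1c, under positivity, the NATE is recovered as the mixture-over-contexts estimand of Equations (12)-(13). -/
theorem lmSCM_nate_recovery
    {Ω 𝒲 𝒴₀ 𝒰₀ 𝒰R 𝒰A 𝒰Y : Type*}
    [MeasurableSpace Ω]
    [Fintype 𝒲] [Nonempty 𝒲] [MeasurableSpace 𝒲] [MeasurableSingletonClass 𝒲]
    [Fintype 𝒴₀] [Nonempty 𝒴₀] [MeasurableSpace 𝒴₀] [MeasurableSingletonClass 𝒴₀]
    [MeasurableSpace 𝒰₀] [MeasurableSpace 𝒰R] [MeasurableSpace 𝒰A] [MeasurableSpace 𝒰Y]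
    (μ : Measure Ω) [IsProbabilityMeasure μ]
    (W : Ω → 𝒲) (U₀ : Ω → 𝒰₀) (UR : Ω → 𝒰R) (UA : Ω → 𝒰A) (UY : Ω → 𝒰Y)
    (hW : Measurable W) (hU₀ : Measurable U₀) (hUR : Measurable UR)
    (hUA : Measurable UA) (hUY : Measurable UY)
    (hIndep : iIndep
      (![MeasurableSpace.comap W inferInstance, MeasurableSpace.comap U₀ inferInstance,
         MeasurableSpace.comap UR inferInstance, MeasurableSpace.comap UA inferInstance,
         MeasurableSpace.comap UY inferInstance] : Fin 5 → MeasurableSpace Ω) μ)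
    (f₀ : 𝒲 × 𝒰₀ → 𝒴₀) (hf₀ : Measurable f₀)
    (fR : 𝒲 × 𝒰R → Fin 2) (hfR : Measurable fR)
    (fA : 𝒲 × 𝒴₀ × 𝒰A → Fin 2) (hfA : Measurable fA)
    (gA : 𝒲 × 𝒰A → Fin 2) (hgA : Measurable gA)
    (fY : 𝒲 × 𝒴₀ × Fin 2 × 𝒰Y → ℝ) (hfY : Measurable fY)
    (gY : 𝒲 × Fin 2 × 𝒰Y → ℝ) (hgY : Measurable gY)
    (Y₀ : Ω → 𝒴₀) (R A : Ω → Fin 2) (Y₁ : Ω → ℝ)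
    (hY₀ : ∀ ω, Y₀ ω = f₀ (W ω, U₀ ω))
    (hR : ∀ ω, R ω = fR (W ω, UR ω))
    (hA : ∀ ω, A ω = if R ω = 1 then fA (W ω, Y₀ ω, UA ω) else gA (W ω, UA ω))
    (hY₁ : ∀ ω, Y₁ ω = if R ω = 1 then fY (W ω, Y₀ ω, A ω, UY ω) else gY (W ω, A ω, UY ω))
    (Ynat : Fin 2 → Ω → ℝ)
    (hYnat : ∀ (a : Fin 2) (ω : Ω),
      Ynat a ω = if R ω = 1 then fY (W ω, Y₀ ω, a, UY ω) else gY (W ω, a, UY ω))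
    (Yful : Fin 2 → Ω → ℝ)
    (hYful : ∀ (a : Fin 2) (ω : Ω), Yful a ω = fY (W ω, Y₀ ω, a, UY ω))
    (hIntY₁ : Integrable Y₁ μ)
    (hIntN0 : Integrable (Ynat 0) μ) (hIntN1 : Integrable (Ynat 1) μ)
    (hIntF0 : Integrable (Yful 0) μ) (hIntF1 : Integrable (Yful 1) μ)
    (hpos : ∀ (w : 𝒲) (y : 𝒴₀) (r a : Fin 2),
      0 < μ {ω | W ω = w ∧ Y₀ ω = y ∧ R ω = r ∧ A ω = a})
    (Q1 : 𝒲 → 𝒴₀ → Fin 2 → ℝ)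
    (hQ1 : ∀ (w : 𝒲) (y : 𝒴₀) (a : Fin 2),
      Q1 w y a = cexp μ Y₁ {ω | W ω = w ∧ Y₀ ω = y ∧ A ω = a ∧ R ω = 1})
    (Q0 : 𝒲 → Fin 2 → ℝ)
    (hQ0 : ∀ (w : 𝒲) (a : Fin 2), Q0 w a = cexp μ Y₁ {ω | W ω = w ∧ A ω = a ∧ R ω = 0})
    :
    (∫ ω, Ynat 1 ω ∂μ) - (∫ ω, Ynat 0 ω ∂μ)
      = (μ {ω | R ω = 0}).toReal *
          (∑ w : 𝒲, (cprob μ {ω | W ω = w} {ω | R ω = 0}).toReal * (Q0 w 1 - Q0 w 0))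
        + (μ {ω | R ω = 1}).toReal *
          (∑ w : 𝒲, ∑ y : 𝒴₀,
            (cprob μ {ω | W ω = w ∧ Y₀ ω = y} {ω | R ω = 1}).toReal
              * (Q1 w y 1 - Q1 w y 0)) := by
  classical
  -- the family of σ-algebras
  set mfam : Fin 5 → MeasurableSpace Ω :=
    ![MeasurableSpace.comap W inferInstance, MeasurableSpace.comap U₀ inferInstance,
      MeasurableSpace.comap UR inferInstance, MeasurableSpace.comap UA inferInstance,
      MeasurableSpace.comap UY inferInstance] with hmfam
  have h_le : ∀ i : Fin 5, mfam i ≤ ‹MeasurableSpace Ω› := by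
    intro i
    fin_cases i
    · exact measurable_iff_comap_le.1 hW
    · exact measurable_iff_comap_le.1 hU₀
    · exact measurable_iff_comap_le.1 hUR
    · exact measurable_iff_comap_le.1 hUA
    · exact measurable_iff_comap_le.1 hUY
  have hdis : Disjoint ({0, 1, 2, 3} : Set (Fin 5)) ({4} : Set (Fin 5)) := by
    rw [Set.disjoint_singleton_right]
    simp
  have hInd : ProbabilityTheory.Indep
      (⨆ i ∈ ({0, 1, 2, 3} : Set (Fin 5)), mfam i) (mfam 4) μ := by
    refine ProbabilityTheory.indep_of_indep_of_le_right
      (ProbabilityTheory.indep_iSup_of_disjoint h_le hIndep hdis) ?_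
    exact le_iSup₂ (f := fun (i : Fin 5) (_ : i ∈ ({4} : Set (Fin 5))) => mfam i) 4 rfl
  have hS_le : (⨆ i ∈ ({0, 1, 2, 3} : Set (Fin 5)), mfam i) ≤ ‹MeasurableSpace Ω› :=
    iSup₂_le fun i _ => h_le i
  have hUYm : Measurable[mfam 4] UY := measurable_iff_comap_le.2 le_rfl
  have hWm : Measurable[⨆ i ∈ ({0, 1, 2, 3} : Set (Fin 5)), mfam i] W :=
    measurable_iff_comap_le.2 (le_iSup₂ (f := fun (i : Fin 5)
      (_ : i ∈ ({0, 1, 2, 3} : Set (Fin 5))) => mfam i) 0 (by simp))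
  have hU₀m : Measurable[⨆ i ∈ ({0, 1, 2, 3} : Set (Fin 5)), mfam i] U₀ :=
    measurable_iff_comap_le.2 (le_iSup₂ (f := fun (i : Fin 5)
      (_ : i ∈ ({0, 1, 2, 3} : Set (Fin 5))) => mfam i) 1 (by simp))
  have hURm : Measurable[⨆ i ∈ ({0, 1, 2, 3} : Set (Fin 5)), mfam i] UR :=
    measurable_iff_comap_le.2 (le_iSup₂ (f := fun (i : Fin 5)
      (_ : i ∈ ({0, 1, 2, 3} : Set (Fin 5))) => mfam i) 2 (by simp))
  have hUAm : Measurable[⨆ i ∈ ({0, 1, 2, 3} : Set (Fin 5)), mfam i] UA :=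
    measurable_iff_comap_le.2 (le_iSup₂ (f := fun (i : Fin 5)
      (_ : i ∈ ({0, 1, 2, 3} : Set (Fin 5))) => mfam i) 3 (by simp))
  have hY₀m : Measurable[⨆ i ∈ ({0, 1, 2, 3} : Set (Fin 5)), mfam i] Y₀ := by
    have h : Y₀ = fun ω => f₀ (W ω, U₀ ω) := funext hY₀
    rw [h]; exact hf₀.comp (hWm.prodMk hU₀m)
  have hRm : Measurable[⨆ i ∈ ({0, 1, 2, 3} : Set (Fin 5)), mfam i] R := by
    have h : R = fun ω => fR (W ω, UR ω) := funext hR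
    rw [h]; exact hfR.comp (hWm.prodMk hURm)
  have hRs : ∀ r : Fin 2, MeasurableSet[⨆ i ∈ ({0, 1, 2, 3} : Set (Fin 5)), mfam i]
      {ω | R ω = r} := fun r => hRm (measurableSet_singleton r)
  have hAm : Measurable[⨆ i ∈ ({0, 1, 2, 3} : Set (Fin 5)), mfam i] A := by
    have h : A = fun ω => if R ω = 1 then fA (W ω, Y₀ ω, UA ω) else gA (W ω, UA ω) :=
      funext hA
    rw [h]
    exact Measurable.ite (hRs 1) (hfA.comp (hWm.prodMk (hY₀m.prodMk hUAm)))
      (hgA.comp (hWm.prodMk hUAm))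
  have hWs : ∀ w : 𝒲, MeasurableSet[⨆ i ∈ ({0, 1, 2, 3} : Set (Fin 5)), mfam i]
      {ω | W ω = w} := fun w => hWm (measurableSet_singleton w)
  have hY₀s : ∀ y : 𝒴₀, MeasurableSet[⨆ i ∈ ({0, 1, 2, 3} : Set (Fin 5)), mfam i]
      {ω | Y₀ ω = y} := fun y => hY₀m (measurableSet_singleton y)
  have hAs : ∀ a : Fin 2, MeasurableSet[⨆ i ∈ ({0, 1, 2, 3} : Set (Fin 5)), mfam i]
      {ω | A ω = a} := fun a => hAm (measurableSet_singleton a)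
  -- the two key facts from independence
  have key : ∀ (E : Set Ω), MeasurableSet[⨆ i ∈ ({0, 1, 2, 3} : Set (Fin 5)), mfam i] E →
      ∀ (G : Ω → ℝ), Measurable[mfam 4] G → Integrable G μ →
      ∫ ω in E, G ω ∂μ = (μ E).toReal * ∫ ω, G ω ∂μ :=
    fun E hEm G hG hGi => aux_integral hS_le (h_le 4) hInd hEm hG hGi
  have keyInt : ∀ (E : Set Ω), MeasurableSet[⨆ i ∈ ({0, 1, 2, 3} : Set (Fin 5)), mfam i] E →
      μ E ≠ 0 → ∀ (G h : Ω → ℝ), Measurable[mfam 4] G →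
      (∀ ω ∈ E, G ω = h ω) → Integrable h μ → Integrable G μ :=
    fun E hEm hE0 G h hG heq hh => aux_integrable hS_le (h_le 4) hInd hEm hE0 hG heq hh
  -- positivity helpers
  have hne : ∀ (S : Set Ω) (w : 𝒲) (y : 𝒴₀) (r a : Fin 2),
      {ω | W ω = w ∧ Y₀ ω = y ∧ R ω = r ∧ A ω = a} ⊆ S → μ S ≠ 0 :=
    fun S w y r a hsub => ((hpos w y r a).trans_le (measure_mono hsub)).ne'
  have hTR : ∀ S : Set Ω, μ S ≠ 0 → (μ S).toReal ≠ 0 :=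
    fun S h => ENNReal.toReal_ne_zero.2 ⟨h, measure_ne_top μ S⟩
  obtain ⟨y₀⟩ := ‹Nonempty 𝒴₀›
  -- integrability of the context-fixed outcome functions
  have hIntF' : ∀ a : Fin 2, Integrable (Yful a) μ := by
    intro a; fin_cases a; exacts [hIntF0, hIntF1]
  have hIntN' : ∀ a : Fin 2, Integrable (Ynat a) μ := by
    intro a; fin_cases a; exacts [hIntN0, hIntN1]
  have hfYc : ∀ (w : 𝒲) (y : 𝒴₀) (a : Fin 2),
      Measurable[mfam 4] fun ω => fY (w, y, a, UY ω) :=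
    fun w y a => (hfY.comp (measurable_const.prodMk (measurable_const.prodMk
      (measurable_const.prodMk measurable_id)))).comp hUYm
  have hgYc : ∀ (w : 𝒲) (a : Fin 2), Measurable[mfam 4] fun ω => gY (w, a, UY ω) :=
    fun w a => (hgY.comp (measurable_const.prodMk
      (measurable_const.prodMk measurable_id))).comp hUYm
  have hint1 : ∀ (w : 𝒲) (y : 𝒴₀) (a : Fin 2),
      Integrable (fun ω => fY (w, y, a, UY ω)) μ := by
    intro w y a
    refine keyInt {ω | W ω = w ∧ Y₀ ω = y} ((hWs w).inter (hY₀s y))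
      (hne _ w y 0 0 fun ω hω => ⟨hω.1, hω.2.1⟩) _ (Yful a) (hfYc w y a) ?_ (hIntF' a)
    intro ω hω
    rw [hYful a ω, hω.1, hω.2]
  have hint0 : ∀ (w : 𝒲) (a : Fin 2), Integrable (fun ω => gY (w, a, UY ω)) μ := by
    intro w a
    refine keyInt {ω | W ω = w ∧ R ω = 0} ((hWs w).inter (hRs 0))
      (hne _ w y₀ 0 0 fun ω hω => ⟨hω.1, hω.2.2.1⟩) _ (Ynat a) (hgYc w a) ?_ (hIntN' a)
    intro ω hω
    rw [hYnat a ω, if_neg (by rw [hω.2]; decide), hω.1]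
  -- identification of Q1 and Q0
  have hQ1' : ∀ (w : 𝒲) (y : 𝒴₀) (a : Fin 2),
      Q1 w y a = ∫ ω, fY (w, y, a, UY ω) ∂μ := by
    intro w y a
    have hEm : MeasurableSet[⨆ i ∈ ({0, 1, 2, 3} : Set (Fin 5)), mfam i]
        {ω | W ω = w ∧ Y₀ ω = y ∧ A ω = a ∧ R ω = 1} :=
      (hWs w).inter ((hY₀s y).inter ((hAs a).inter (hRs 1)))
    have hne1 : μ {ω | W ω = w ∧ Y₀ ω = y ∧ A ω = a ∧ R ω = 1} ≠ 0 :=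
      hne _ w y 1 a fun ω hω => ⟨hω.1, hω.2.1, hω.2.2.2, hω.2.2.1⟩
    have hcong : ∫ ω in {ω | W ω = w ∧ Y₀ ω = y ∧ A ω = a ∧ R ω = 1}, Y₁ ω ∂μ
        = ∫ ω in {ω | W ω = w ∧ Y₀ ω = y ∧ A ω = a ∧ R ω = 1}, fY (w, y, a, UY ω) ∂μ :=
      setIntegral_congr_fun (hS_le _ hEm) fun ω hω => by
        rw [hY₁ ω, if_pos hω.2.2.2, hω.1, hω.2.1, hω.2.2.1]
    rw [hQ1, cexp, hcong, key _ hEm _ (hfYc w y a) (hint1 w y a), ← mul_assoc,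
      inv_mul_cancel₀ (hTR _ hne1), one_mul]
  have hQ0' : ∀ (w : 𝒲) (a : Fin 2), Q0 w a = ∫ ω, gY (w, a, UY ω) ∂μ := by
    intro w a
    have hEm : MeasurableSet[⨆ i ∈ ({0, 1, 2, 3} : Set (Fin 5)), mfam i]
        {ω | W ω = w ∧ A ω = a ∧ R ω = 0} :=
      (hWs w).inter ((hAs a).inter (hRs 0))
    have hne0 : μ {ω | W ω = w ∧ A ω = a ∧ R ω = 0} ≠ 0 :=
      hne _ w y₀ 0 a fun ω hω => ⟨hω.1, hω.2.2.2, hω.2.2.1⟩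
    have hcong : ∫ ω in {ω | W ω = w ∧ A ω = a ∧ R ω = 0}, Y₁ ω ∂μ
        = ∫ ω in {ω | W ω = w ∧ A ω = a ∧ R ω = 0}, gY (w, a, UY ω) ∂μ :=
      setIntegral_congr_fun (hS_le _ hEm) fun ω hω => by
        rw [hY₁ ω, if_neg (by rw [hω.2.2]; decide), hω.1, hω.2.1]
    rw [hQ0, cexp, hcong, key _ hEm _ (hgYc w a) (hint0 w a), ← mul_assoc,
      inv_mul_cancel₀ (hTR _ hne0), one_mul]
  -- the stratum-wise integrals of the natural potential outcomes
  have P1 : ∀ (w : 𝒲) (y : 𝒴₀) (a : Fin 2),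
      ∫ ω in {ω | W ω = w ∧ Y₀ ω = y ∧ R ω = 1}, Ynat a ω ∂μ
        = (μ {ω | W ω = w ∧ Y₀ ω = y ∧ R ω = 1}).toReal * Q1 w y a := by
    intro w y a
    have hEm : MeasurableSet[⨆ i ∈ ({0, 1, 2, 3} : Set (Fin 5)), mfam i]
        {ω | W ω = w ∧ Y₀ ω = y ∧ R ω = 1} :=
      (hWs w).inter ((hY₀s y).inter (hRs 1))
    have hcong : ∫ ω in {ω | W ω = w ∧ Y₀ ω = y ∧ R ω = 1}, Ynat a ω ∂μ
        = ∫ ω in {ω | W ω = w ∧ Y₀ ω = y ∧ R ω = 1}, fY (w, y, a, UY ω) ∂μ :=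
      setIntegral_congr_fun (hS_le _ hEm) fun ω hω => by
        rw [hYnat a ω, if_pos hω.2.2, hω.1, hω.2.1]
    rw [hcong, key _ hEm _ (hfYc w y a) (hint1 w y a), ← hQ1' w y a]
  have P0 : ∀ (w : 𝒲) (a : Fin 2),
      ∫ ω in {ω | W ω = w ∧ R ω = 0}, Ynat a ω ∂μ
        = (μ {ω | W ω = w ∧ R ω = 0}).toReal * Q0 w a := by
    intro w a
    have hEm : MeasurableSet[⨆ i ∈ ({0, 1, 2, 3} : Set (Fin 5)), mfam i]
        {ω | W ω = w ∧ R ω = 0} := (hWs w).inter (hRs 0)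
    have hcong : ∫ ω in {ω | W ω = w ∧ R ω = 0}, Ynat a ω ∂μ
        = ∫ ω in {ω | W ω = w ∧ R ω = 0}, gY (w, a, UY ω) ∂μ :=
      setIntegral_congr_fun (hS_le _ hEm) fun ω hω => by
        rw [hYnat a ω, if_neg (by rw [hω.2]; decide), hω.1]
    rw [hcong, key _ hEm _ (hgYc w a) (hint0 w a), ← hQ0' w a]
  -- decomposing the total expectation into strata
  have hfin2 : ∀ r : Fin 2, ¬r = 1 ↔ r = 0 := by decide
  have hcomplR : {ω | R ω = 1}ᶜ = {ω | R ω = 0} := by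
    ext ω
    simp only [Set.mem_compl_iff, Set.mem_setOf_eq]
    exact hfin2 (R ω)
  have hsum1 : ∀ a : Fin 2, ∫ ω in {ω | R ω = 1}, Ynat a ω ∂μ
      = ∑ w : 𝒲, ∑ y : 𝒴₀, ∫ ω in {ω | W ω = w ∧ Y₀ ω = y ∧ R ω = 1}, Ynat a ω ∂μ := by
    intro a
    have hcov : {ω | R ω = 1}
        = ⋃ p : 𝒲 × 𝒴₀, {ω | W ω = p.1 ∧ Y₀ ω = p.2 ∧ R ω = 1} := by
      ext ω
      simp only [Set.mem_iUnion, Set.mem_setOf_eq]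
      exact ⟨fun h => ⟨(W ω, Y₀ ω), rfl, rfl, h⟩, fun ⟨p, h⟩ => h.2.2⟩
    have hdisj : Pairwise (Function.onFun Disjoint
        fun p : 𝒲 × 𝒴₀ => {ω | W ω = p.1 ∧ Y₀ ω = p.2 ∧ R ω = 1}) := by
      intro p q hpq
      rw [Function.onFun, Set.disjoint_left]
      intro ω h1 h2
      exact hpq (Prod.ext (h1.1.symm.trans h2.1) (h1.2.1.symm.trans h2.2.1))
    rw [hcov, integral_iUnion
      (fun p : 𝒲 × 𝒴₀ => (show MeasurableSet {ω | W ω = p.1 ∧ Y₀ ω = p.2 ∧ R ω = 1} from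
        hS_le _ ((hWs p.1).inter ((hY₀s p.2).inter (hRs 1))))) hdisj
      ((hIntN' a).integrableOn), tsum_fintype]
    exact Fintype.sum_prod_type _
  have hsum0 : ∀ a : Fin 2, ∫ ω in {ω | R ω = 0}, Ynat a ω ∂μ
      = ∑ w : 𝒲, ∫ ω in {ω | W ω = w ∧ R ω = 0}, Ynat a ω ∂μ := by
    intro a
    have hcov : {ω | R ω = 0} = ⋃ w : 𝒲, {ω | W ω = w ∧ R ω = 0} := by
      ext ω
      simp only [Set.mem_iUnion, Set.mem_setOf_eq]
      exact ⟨fun h => ⟨W ω, rfl, h⟩, fun ⟨w, h⟩ => h.2⟩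
    have hdisj : Pairwise (Function.onFun Disjoint
        fun w : 𝒲 => {ω | W ω = w ∧ R ω = 0}) := by
      intro p q hpq
      rw [Function.onFun, Set.disjoint_left]
      intro ω h1 h2
      exact hpq (h1.1.symm.trans h2.1)
    rw [hcov, integral_iUnion
      (fun w : 𝒲 => (show MeasurableSet {ω | W ω = w ∧ R ω = 0} from
        hS_le _ ((hWs w).inter (hRs 0)))) hdisj
      ((hIntN' a).integrableOn), tsum_fintype]
  have hSplit : ∀ a : Fin 2, ∫ ω, Ynat a ω ∂μ
      = (∑ w : 𝒲, (μ {ω | W ω = w ∧ R ω = 0}).toReal * Q0 w a)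
        + ∑ w : 𝒲, ∑ y : 𝒴₀, (μ {ω | W ω = w ∧ Y₀ ω = y ∧ R ω = 1}).toReal * Q1 w y a := by
    intro a
    have h1 := integral_add_compl (hS_le _ (hRs 1)) (hIntN' a)
    rw [hcomplR] at h1
    rw [← h1, hsum1 a, hsum0 a, add_comm]
    congr 1
    · exact Finset.sum_congr rfl fun w _ => P0 w a
    · exact Finset.sum_congr rfl fun w _ =>
        Finset.sum_congr rfl fun y _ => P1 w y a
  -- simplify the conditional probabilities in the goal
  have hneR0 : μ {ω | R ω = 0} ≠ 0 :=
    hne _ (Classical.arbitrary 𝒲) y₀ 0 0 fun ω hω => hω.2.2.1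
  have hneR1 : μ {ω | R ω = 1} ≠ 0 :=
    hne _ (Classical.arbitrary 𝒲) y₀ 1 0 fun ω hω => hω.2.2.1
  have hcp0 : ∀ w : 𝒲, (cprob μ {ω | W ω = w} {ω | R ω = 0}).toReal
      = (μ {ω | W ω = w ∧ R ω = 0}).toReal / (μ {ω | R ω = 0}).toReal := by
    intro w
    have hI : {ω | W ω = w} ∩ {ω | R ω = 0} = {ω | W ω = w ∧ R ω = 0} := rfl
    rw [cprob, hI, ENNReal.toReal_div]
  have hcp1 : ∀ (w : 𝒲) (y : 𝒴₀),
      (cprob μ {ω | W ω = w ∧ Y₀ ω = y} {ω | R ω = 1}).toReal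
      = (μ {ω | W ω = w ∧ Y₀ ω = y ∧ R ω = 1}).toReal / (μ {ω | R ω = 1}).toReal := by
    intro w y
    have hI : {ω | W ω = w ∧ Y₀ ω = y} ∩ {ω | R ω = 1}
        = {ω | W ω = w ∧ Y₀ ω = y ∧ R ω = 1} := by
      ext ω
      simp only [Set.mem_inter_iff, Set.mem_setOf_eq]
      tauto
    rw [cprob, hI, ENNReal.toReal_div]
  have hmulterm : ∀ (c x q : ℝ), c ≠ 0 → c * (x / c * q) = x * q := by
    intro c x q hc
    field_simp
  rw [hSplit 1, hSplit 0]
  simp only [hcp0, hcp1]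
  rw [Finset.mul_sum, Finset.mul_sum]
  have hR0 : ∀ w ∈ (Finset.univ : Finset 𝒲),
      (μ {ω | R ω = 0}).toReal * ((μ {ω | W ω = w ∧ R ω = 0}).toReal
        / (μ {ω | R ω = 0}).toReal * (Q0 w 1 - Q0 w 0))
      = (μ {ω | W ω = w ∧ R ω = 0}).toReal * (Q0 w 1 - Q0 w 0) :=
    fun w _ => hmulterm _ _ _ (hTR _ hneR0)
  have hR1 : ∀ w ∈ (Finset.univ : Finset 𝒲),
      (μ {ω | R ω = 1}).toReal * (∑ y : 𝒴₀,
        (μ {ω | W ω = w ∧ Y₀ ω = y ∧ R ω = 1}).toReal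
          / (μ {ω | R ω = 1}).toReal * (Q1 w y 1 - Q1 w y 0))
      = ∑ y : 𝒴₀, (μ {ω | W ω = w ∧ Y₀ ω = y ∧ R ω = 1}).toReal
          * (Q1 w y 1 - Q1 w y 0) := by
    intro w _
    rw [Finset.mul_sum]
    exact Finset.sum_congr rfl fun y _ => hmulterm _ _ _ (hTR _ hneR1)
  rw [Finset.sum_congr rfl hR0, Finset.sum_congr rfl hR1]
  simp only [mul_sub, Finset.sum_sub_distrib]
  ring
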